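/- arXiv:1311.3737 — 2 statements merged into one kernel-verified Lean document; each statement's English description precedes it below -/
import Mathlib

section
/- Let p₀, μ > 0, T > 0, let x : [0,T] → ℝ be C¹, and let R > 0 with |x(t)| < R for all t. Let (ρ₋,u₋) be C¹ on {(t,y) ∈ [0,T] × ℝ : y ≤ x(t)} and (ρ₊,u₊) be C¹ on {(t,y) : y ≥ x(t)}, each with positive density and solving the Chaplygin gas system ∂_t ρ + ∂_x(ρu) = 0, ∂_t(ρu) + ∂_x(ρu² + p₀ − μ²/ρ) = 0 in the interior of its region, and suppose there are constants ρ̄ > 0, ū such that (ρ₋,u₋)(t,y) = (ρ̄,ū) for y ≤ −R and (ρ₊,u₊)(t,y) = (ρ̄,ū) for y ≥ R. Define the total mass S_ρ(t) := ∫_{−R}^{x(t)} ρ₋(t,y) dy + ∫_{x(t)}^{R} ρ₊(t,y) dy and write [h](t) := h₊(t,x(t)) − h₋(t,x(t)). Then for all t ∈ (0,T): dS_ρ/dt (t) = −ẋ(t)[ρ](t) + [ρu](t). Consequently, if w : [0,T] → ℝ is C¹ and satisfies the generalized Rankine–Hugoniot condition d/dt ( w(t) √(1 + ẋ(t)²)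 ) = ẋ(t)[ρ](t) − [ρu](t), then the generalized total mass S_ρ(t) + w(t) √(1 + ẋ(t)²) is constant in t. -/
open Set

/-- Partial derivative with respect to the first (time) variable. -/
noncomputable def pt (f : ℝ × ℝ → ℝ) (q : ℝ × ℝ) : ℝ := deriv (fun s => f (s, q.2)) q.1

/-- Partial derivative with respect to the second (space) variable. -/
noncomputable def px (f : ℝ × ℝ → ℝ) (q : ℝ × ℝ) : ℝ := deriv (fun y => f (q.1, y)) q.2

open Topology Filter MeasureTheory intervalIntegral Metric Interval

lemma sideDeriv (T : ℝ) (x : ℝ → ℝ) (hx : ContDiffOn ℝ 1 x (Icc 0 T))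
    (ρ u : ℝ × ℝ → ℝ)
    (hρ : ContDiffOn ℝ 1 ρ {q : ℝ × ℝ | q.1 ∈ Icc 0 T ∧ q.2 ≤ x q.1})
    (hu : ContDiffOn ℝ 1 u {q : ℝ × ℝ | q.1 ∈ Icc 0 T ∧ q.2 ≤ x q.1})
    (mass : ∀ q ∈ {q : ℝ × ℝ | 0 < q.1 ∧ q.1 < T ∧ q.2 < x q.1},
      pt ρ q + px (fun q => ρ q * u q) q = 0)
    (L : ℝ) (hL : 0 < L) (t : ℝ) (ht : t ∈ Ioo (0:ℝ) T) :
    HasDerivAt (fun s => ∫ z in (-L)..(0:ℝ), ρ (s, z + x s))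
      ((deriv x t * ρ (t, 0 + x t) - ρ (t, 0 + x t) * u (t, 0 + x t))
        - (deriv x t * ρ (t, -L + x t) - ρ (t, -L + x t) * u (t, -L + x t))) t := by
  have hT : (0:ℝ) < T := lt_trans ht.1 ht.2
  have hL0 : -L ≤ (0:ℝ) := by linarith
  set D : Set (ℝ × ℝ) := {q : ℝ × ℝ | q.1 ∈ Icc 0 T ∧ q.2 ≤ x q.1} with hDdef
  set E : Set (ℝ × ℝ) := Icc (0:ℝ) T ×ˢ Iic (0:ℝ) with hEdef
  set φ : ℝ × ℝ → ℝ := fun q => ρ (q.1, q.2 + x q.1) with hφdef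
  -- φ is C¹ on E
  have hΨ : ContDiffOn ℝ 1 (fun q : ℝ × ℝ => (q.1, q.2 + x q.1)) E := by
    apply ContDiffOn.prodMk
    · exact contDiff_fst.contDiffOn
    · exact contDiff_snd.contDiffOn.add
        (hx.comp contDiff_fst.contDiffOn (fun q hq => hq.1))
  have hmaps : MapsTo (fun q : ℝ × ℝ => (q.1, q.2 + x q.1)) E D := by
    intro q hq
    exact ⟨hq.1, by have := hq.2; simp only [mem_Iic] at this; simp; linarith⟩
  have hφ : ContDiffOn ℝ 1 φ E := hρ.comp hΨ hmaps
  have hE : UniqueDiffOn ℝ E := (uniqueDiffOn_Icc hT).prod (uniqueDiffOn_Iic 0)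
  have hEint : interior E = Ioo (0:ℝ) T ×ˢ Iio (0:ℝ) := by
    rw [hEdef, interior_prod_eq, interior_Icc, interior_Iic]
  obtain ⟨ε, hε, hball⟩ : ∃ ε > 0, closedBall t ε ⊆ Ioo (0:ℝ) T := by
    obtain ⟨ε, hε, h⟩ := Metric.isOpen_iff.1 isOpen_Ioo t ht
    exact ⟨ε/2, by positivity, (closedBall_subset_ball (by linarith)).trans h⟩
  have hCE : closedBall t ε ×ˢ Icc (-L) (0:ℝ) ⊆ E := by
    apply prod_mono (hball.trans Ioo_subset_Icc_self)
    exact fun z hz => hz.2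
  obtain ⟨M, hM⟩ : ∃ M, ∀ q ∈ closedBall t ε ×ˢ Icc (-L) (0:ℝ),
      ‖fderivWithin ℝ φ E q‖ ≤ M :=
    ((isCompact_closedBall _ _).prod isCompact_Icc).exists_bound_of_continuousOn
      ((hφ.continuousOn_fderivWithin hE le_rfl).mono hCE)
  set F' : ℝ → ℝ → ℝ := fun s z => fderiv ℝ φ (s, z) (1, 0) with hF'def
  have hkey : ∀ s ∈ ball t ε, ∀ z ∈ Ioo (-L) (0:ℝ),
      HasDerivAt (fun s' => φ (s', z)) (F' s z) s ∧ ‖F' s z‖ ≤ M := by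
    intro s hs z hz
    have hsI : s ∈ Ioo (0:ℝ) T := hball (ball_subset_closedBall hs)
    have hmem : (s, z) ∈ interior E := by rw [hEint]; exact ⟨hsI, hz.2⟩
    have hEn : E ∈ 𝓝 (s, z) := mem_interior_iff_mem_nhds.1 hmem
    have hdiff : DifferentiableAt ℝ φ (s, z) := (hφ.contDiffAt hEn).differentiableAt one_ne_zero
    constructor
    · exact hdiff.hasFDerivAt.comp_hasDerivAt (l := φ) (f := fun s' : ℝ => ((s', z) : ℝ × ℝ)) s ((hasDerivAt_id s).prodMk (hasDerivAt_const s z))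
    · have heq : fderiv ℝ φ (s, z) = fderivWithin ℝ φ E (s, z) :=
        (fderivWithin_of_mem_nhds hEn).symm
      calc ‖fderiv ℝ φ (s, z) (1, 0)‖ ≤ ‖fderiv ℝ φ (s, z)‖ * ‖((1:ℝ), (0:ℝ))‖ :=
            ContinuousLinearMap.le_opNorm _ _
        _ ≤ M * 1 := by
            rw [heq]
            apply mul_le_mul (hM _ ⟨ball_subset_closedBall hs, le_of_lt hz.1, le_of_lt hz.2⟩)
            · simp [Prod.norm_def]
            · positivity
            · exact le_trans (norm_nonneg _) (hM ((t, 0) : ℝ × ℝ)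
                ⟨ball_subset_closedBall (mem_ball_self hε), right_mem_Icc.2 hL0⟩)
        _ = M := mul_one M
  have hmn : ∀ᵐ z : ℝ, z ∈ Ι (-L) (0:ℝ) → z ∈ Ioo (-L) (0:ℝ) := by
    have h0 : ∀ᵐ z : ℝ, z ≠ (0:ℝ) := by
      rw [ae_iff]
      simp [Set.setOf_eq_eq_singleton, not_not]
    filter_upwards [h0] with z hz hmem
    rw [uIoc_of_le hL0] at hmem
    exact ⟨hmem.1, lt_of_le_of_ne hmem.2 hz⟩
  have hcomp : ∀ s ∈ Icc (0:ℝ) T, ContinuousOn (fun z => φ (s, z)) (Iic (0:ℝ)) := by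
    intro s hs
    apply hρ.continuousOn.comp
    · show ContinuousOn (fun z : ℝ => ((s, z + x s) : ℝ × ℝ)) (Iic (0:ℝ))
      exact (continuous_const.prodMk (continuous_id.add continuous_const)).continuousOn
    · intro z hz
      exact ⟨hs, by simp only [mem_Iic] at hz ⊢; linarith⟩
  have hF_meas : ∀ᶠ s in 𝓝 t, AEStronglyMeasurable (fun z => φ (s, z))
      (volume.restrict (Ι (-L) (0:ℝ))) := by
    filter_upwards [Ioo_mem_nhds ht.1 ht.2] with s hs
    rw [uIoc_of_le hL0]
    exact ((hcomp s (Ioo_subset_Icc_self hs)).mono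
      (fun z hz => hz.2)).aestronglyMeasurable measurableSet_Ioc
  have hF_int : IntervalIntegrable (fun z => φ (t, z)) volume (-L) 0 := by
    apply ContinuousOn.intervalIntegrable
    exact (hcomp t (Ioo_subset_Icc_self ht)).mono (by rw [uIcc_of_le hL0]; exact fun z hz => hz.2)
  have hres : volume.restrict (Ι (-L) (0:ℝ)) = volume.restrict (Ioo (-L) (0:ℝ)) := by
    rw [uIoc_of_le hL0]
    exact (Measure.restrict_congr_set Ioo_ae_eq_Ioc).symm
  have hF'_meas : AEStronglyMeasurable (F' t) (volume.restrict (Ι (-L) (0:ℝ))) := by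
    rw [hres]
    have hfc : ContinuousOn (fun q => fderiv ℝ φ q) (interior E) :=
      (hφ.mono interior_subset).continuousOn_fderiv_of_isOpen isOpen_interior le_rfl
    have hmapto : ∀ z ∈ Ioo (-L) (0:ℝ), ((t, z) : ℝ × ℝ) ∈ interior E := by
      intro z hz; rw [hEint]; exact ⟨ht, hz.2⟩
    have h1 : ContinuousOn (fun z : ℝ => fderiv ℝ φ (t, z)) (Ioo (-L) (0:ℝ)) :=
      hfc.comp (continuous_const.prodMk continuous_id).continuousOn hmapto
    exact (((ContinuousLinearMap.apply ℝ ℝ ((1:ℝ), (0:ℝ))).continuous.comp_continuousOn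
      h1).aestronglyMeasurable measurableSet_Ioo)
  have h_bound : ∀ᵐ z : ℝ, z ∈ Ι (-L) (0:ℝ) → ∀ s ∈ ball t ε, ‖F' s z‖ ≤ M := by
    filter_upwards [hmn] with z hz hmem s hs
    exact (hkey s hs z (hz hmem)).2
  have h_diff : ∀ᵐ z : ℝ, z ∈ Ι (-L) (0:ℝ) → ∀ s ∈ ball t ε,
      HasDerivAt (fun s' => φ (s', z)) (F' s z) s := by
    filter_upwards [hmn] with z hz hmem s hs
    exact (hkey s hs z (hz hmem)).1
  obtain ⟨hFint', hHD⟩ := intervalIntegral.hasDerivAt_integral_of_dominated_loc_of_deriv_le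
    (ball_mem_nhds t hε) hF_meas hF_int hF'_meas h_bound (intervalIntegrable_const) h_diff
  -- now identify the integral of F' t with boundary terms
  have hdx : DifferentiableAt ℝ x t :=
    (hx.differentiableOn one_ne_zero).differentiableAt (Icc_mem_nhds ht.1 ht.2)
  have hx't : HasDerivAt x (deriv x t) t := hdx.hasDerivAt
  set θ : ℝ → ℝ := fun z => deriv x t * ρ (t, z + x t) - ρ (t, z + x t) * u (t, z + x t)
    with hθdef
  have hDnhds : ∀ z ∈ Ioo (-L) (0:ℝ), D ∈ 𝓝 ((t, z + x t) : ℝ × ℝ) := by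
    intro z hz
    have hcx : ContinuousAt x t := hx.continuousOn.continuousAt (Icc_mem_nhds ht.1 ht.2)
    have hclt : z + x t < x t := by linarith [hz.2]
    set c' : ℝ := (z + x t + x t) / 2 with hc'
    have h1 : x ⁻¹' (Ioi c') ∈ 𝓝 t := hcx.preimage_mem_nhds (Ioi_mem_nhds (by rw [hc']; linarith))
    have h2 : Ioo (0:ℝ) T ∈ 𝓝 t := Ioo_mem_nhds ht.1 ht.2
    apply Filter.mem_of_superset (prod_mem_nhds (Filter.inter_mem h2 h1)
      (Iic_mem_nhds (show z + x t < c' by rw [hc']; linarith)))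
    rintro ⟨s, y⟩ ⟨⟨hs1, hs2⟩, hy⟩
    exact ⟨Ioo_subset_Icc_self hs1, le_trans hy (le_of_lt hs2)⟩
  have hzcalc : ∀ z ∈ Ioo (-L) (0:ℝ), HasDerivAt θ (F' t z) z := by
    intro z hz
    have hq : D ∈ 𝓝 ((t, z + x t) : ℝ × ℝ) := hDnhds z hz
    have hρd : DifferentiableAt ℝ ρ (t, z + x t) := (hρ.contDiffAt hq).differentiableAt one_ne_zero
    have hud : DifferentiableAt ℝ u (t, z + x t) := (hu.contDiffAt hq).differentiableAt one_ne_zero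
    have hgd : DifferentiableAt ℝ (fun q => ρ q * u q) ((t, z + x t) : ℝ × ℝ) := hρd.mul hud
    -- partial-derivative facts
    have hxpart : ∀ f : ℝ × ℝ → ℝ, DifferentiableAt ℝ f ((t, z + x t) : ℝ × ℝ) →
        HasDerivAt (fun y => f (t, y)) (fderiv ℝ f (t, z + x t) (0, 1)) (z + x t) := by
      intro f hf
      exact hf.hasFDerivAt.comp_hasDerivAt (z + x t)
        ((hasDerivAt_const (z + x t) t).prodMk (hasDerivAt_id (z + x t)))
    have htpart : ∀ f : ℝ × ℝ → ℝ, DifferentiableAt ℝ f ((t, z + x t) : ℝ × ℝ) →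
        HasDerivAt (fun s => f (s, z + x t)) (fderiv ℝ f (t, z + x t) (1, 0)) t := by
      intro f hf
      exact hf.hasFDerivAt.comp_hasDerivAt t ((hasDerivAt_id t).prodMk (hasDerivAt_const t (z + x t)))
    have e1 : pt ρ ((t, z + x t) : ℝ × ℝ) = fderiv ℝ ρ (t, z + x t) (1, 0) :=
      (htpart ρ hρd).deriv
    have e2 : px (fun q => ρ q * u q) ((t, z + x t) : ℝ × ℝ)
        = fderiv ℝ (fun q => ρ q * u q) (t, z + x t) (0, 1) :=
      (hxpart _ hgd).deriv
    have hmass : pt ρ ((t, z + x t) : ℝ × ℝ) + px (fun q => ρ q * u q) ((t, z + x t) : ℝ × ℝ) = 0 :=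
      mass _ ⟨ht.1, ht.2, by simpa using (by linarith [hz.2] : z + x t < x t)⟩
    -- compute F' t z
    have hxfd : HasFDerivAt (fun q : ℝ × ℝ => x q.1)
        ((ContinuousLinearMap.smulRight (1 : ℝ →L[ℝ] ℝ) (deriv x t)).comp
          (ContinuousLinearMap.fst ℝ ℝ ℝ)) ((t, z) : ℝ × ℝ) :=
      hx't.hasFDerivAt.comp (t, z) hasFDerivAt_fst
    have hΨfd : HasFDerivAt (fun q : ℝ × ℝ => ((q.1, q.2 + x q.1) : ℝ × ℝ))
        ((ContinuousLinearMap.fst ℝ ℝ ℝ).prod ((ContinuousLinearMap.snd ℝ ℝ ℝ) +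
          ((ContinuousLinearMap.smulRight (1 : ℝ →L[ℝ] ℝ) (deriv x t)).comp
            (ContinuousLinearMap.fst ℝ ℝ ℝ)))) ((t, z) : ℝ × ℝ) :=
      hasFDerivAt_fst.prodMk (hasFDerivAt_snd.add hxfd)
    have hφfd : HasFDerivAt φ ((fderiv ℝ ρ (t, z + x t)).comp
        ((ContinuousLinearMap.fst ℝ ℝ ℝ).prod ((ContinuousLinearMap.snd ℝ ℝ ℝ) +
          ((ContinuousLinearMap.smulRight (1 : ℝ →L[ℝ] ℝ) (deriv x t)).comp
            (ContinuousLinearMap.fst ℝ ℝ ℝ))))) ((t, z) : ℝ × ℝ) :=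
      hρd.hasFDerivAt.comp (t, z) hΨfd
    have hF'val : F' t z = fderiv ℝ ρ (t, z + x t) ((1:ℝ), deriv x t) := by
      show fderiv ℝ φ (t, z) (1, 0) = _
      rw [hφfd.fderiv]
      simp [ContinuousLinearMap.comp_apply, ContinuousLinearMap.prod_apply]
    have hsplit : fderiv ℝ ρ (t, z + x t) ((1:ℝ), deriv x t)
        = fderiv ℝ ρ (t, z + x t) (1, 0) + deriv x t * fderiv ℝ ρ (t, z + x t) (0, 1) := by
      have : ((1:ℝ), deriv x t) = ((1:ℝ), (0:ℝ)) + deriv x t • ((0:ℝ), (1:ℝ)) := by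
        simp [Prod.ext_iff]
      rw [this, ContinuousLinearMap.map_add, ContinuousLinearMap.map_smul, smul_eq_mul]
    -- derivative of θ
    have inner1 : HasDerivAt (fun z' => ρ (t, z' + x t))
        (fderiv ℝ ρ (t, z + x t) (0, 1)) z := by
      have := HasDerivAt.comp z (hxpart ρ hρd) ((hasDerivAt_id z).add_const (x t))
      simpa [Function.comp_def] using this
    have inner2 : HasDerivAt (fun z' => ρ (t, z' + x t) * u (t, z' + x t))
        (fderiv ℝ (fun q => ρ q * u q) (t, z + x t) (0, 1)) z := by
      have := HasDerivAt.comp z (hxpart _ hgd) ((hasDerivAt_id z).add_const (x t))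
      simpa [Function.comp_def] using this
    have hθd : HasDerivAt θ (deriv x t * fderiv ℝ ρ (t, z + x t) (0, 1)
        - fderiv ℝ (fun q => ρ q * u q) (t, z + x t) (0, 1)) z :=
      (inner1.const_mul (deriv x t)).sub inner2
    have hval : F' t z = deriv x t * fderiv ℝ ρ (t, z + x t) (0, 1)
        - fderiv ℝ (fun q => ρ q * u q) (t, z + x t) (0, 1) := by
      rw [hF'val, hsplit]
      rw [e1, e2] at hmass
      linarith
    rw [hval]
    exact hθd
  have hθcont : ContinuousOn θ (Icc (-L) (0:ℝ)) := by
    have hc1 : ContinuousOn (fun z : ℝ => ((t, z + x t) : ℝ × ℝ)) (Icc (-L) (0:ℝ)) :=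
      (continuous_const.prodMk (continuous_id.add continuous_const)).continuousOn
    have hmap2 : ∀ z ∈ Icc (-L) (0:ℝ), ((t, z + x t) : ℝ × ℝ) ∈ D := by
      intro z hz
      exact ⟨Ioo_subset_Icc_self ht, by simp; linarith [hz.2]⟩
    exact (continuousOn_const.mul ((hρ.continuousOn.comp hc1 hmap2))).sub
      ((hρ.continuousOn.comp hc1 hmap2).mul (hu.continuousOn.comp hc1 hmap2))
  have hFTC : ∫ z in (-L)..(0:ℝ), F' t z = θ 0 - θ (-L) :=
    intervalIntegral.integral_eq_sub_of_hasDeriv_right_of_le hL0 hθcont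
      (fun z hz => (hzcalc z hz).hasDerivWithinAt) hFint'
  rw [hFTC] at hHD
  exact hHD

/-- Theorem 4.1 (mass part): the balance law `Ṡ_ρ = −ẋ[ρ] + [ρu]` holds, and with the
first generalized Rankine–Hugoniot condition the generalized total mass
`S_ρ(t) + w(t)√(1+ẋ(t)²)` is conserved. -/
theorem generalized_mass_conservation
    (p₀ μ T : ℝ) (hp₀ : 0 < p₀) (hμ : 0 < μ) (hT : 0 < T)
    (x : ℝ → ℝ) (hx : ContDiffOn ℝ 1 x (Icc 0 T))
    (R : ℝ) (hR : 0 < R) (hxR : ∀ t ∈ Icc (0:ℝ) T, |x t| < R)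
    (ρm um ρp up : ℝ × ℝ → ℝ)
    (hρm : ContDiffOn ℝ 1 ρm {q : ℝ × ℝ | q.1 ∈ Icc 0 T ∧ q.2 ≤ x q.1})
    (hum : ContDiffOn ℝ 1 um {q : ℝ × ℝ | q.1 ∈ Icc 0 T ∧ q.2 ≤ x q.1})
    (hρp : ContDiffOn ℝ 1 ρp {q : ℝ × ℝ | q.1 ∈ Icc 0 T ∧ x q.1 ≤ q.2})
    (hup : ContDiffOn ℝ 1 up {q : ℝ × ℝ | q.1 ∈ Icc 0 T ∧ x q.1 ≤ q.2})
    (hρmpos : ∀ q ∈ {q : ℝ × ℝ | q.1 ∈ Icc 0 T ∧ q.2 ≤ x q.1}, 0 < ρm q)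
    (hρppos : ∀ q ∈ {q : ℝ × ℝ | q.1 ∈ Icc 0 T ∧ x q.1 ≤ q.2}, 0 < ρp q)
    (massm : ∀ q ∈ {q : ℝ × ℝ | 0 < q.1 ∧ q.1 < T ∧ q.2 < x q.1},
      pt ρm q + px (fun q => ρm q * um q) q = 0)
    (momentumm : ∀ q ∈ {q : ℝ × ℝ | 0 < q.1 ∧ q.1 < T ∧ q.2 < x q.1},
      pt (fun q => ρm q * um q) q
        + px (fun q => ρm q * um q ^ 2 + p₀ - μ ^ 2 / ρm q) q = 0)
    (massp : ∀ q ∈ {q : ℝ × ℝ | 0 < q.1 ∧ q.1 < T ∧ x q.1 < q.2},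
      pt ρp q + px (fun q => ρp q * up q) q = 0)
    (momentump : ∀ q ∈ {q : ℝ × ℝ | 0 < q.1 ∧ q.1 < T ∧ x q.1 < q.2},
      pt (fun q => ρp q * up q) q
        + px (fun q => ρp q * up q ^ 2 + p₀ - μ ^ 2 / ρp q) q = 0)
    (ρbar ubar : ℝ) (hρbar : 0 < ρbar)
    (hconstm : ∀ t ∈ Icc (0:ℝ) T, ∀ y : ℝ, y ≤ -R → ρm (t, y) = ρbar ∧ um (t, y) = ubar)
    (hconstp : ∀ t ∈ Icc (0:ℝ) T, ∀ y : ℝ, R ≤ y → ρp (t, y) = ρbar ∧ up (t, y) = ubar) :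
    (∀ t ∈ Ioo (0:ℝ) T,
      HasDerivAt (fun s => (∫ y in (-R)..(x s), ρm (s, y)) + ∫ y in (x s)..R, ρp (s, y))
        (-(deriv x t) * (ρp (t, x t) - ρm (t, x t))
          + (ρp (t, x t) * up (t, x t) - ρm (t, x t) * um (t, x t))) t) ∧
    ∀ w : ℝ → ℝ, ContDiffOn ℝ 1 w (Icc 0 T) →
      (∀ t ∈ Ioo (0:ℝ) T,
        HasDerivAt (fun s => w s * Real.sqrt (1 + deriv x s ^ 2))
          (deriv x t * (ρp (t, x t) - ρm (t, x t))
            - (ρp (t, x t) * up (t, x t) - ρm (t, x t) * um (t, x t))) t) →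
      ∀ t₁ ∈ Ioo (0:ℝ) T, ∀ t₂ ∈ Ioo (0:ℝ) T,
        ((∫ y in (-R)..(x t₁), ρm (t₁, y)) + ∫ y in (x t₁)..R, ρp (t₁, y))
            + w t₁ * Real.sqrt (1 + deriv x t₁ ^ 2)
          = ((∫ y in (-R)..(x t₂), ρm (t₂, y)) + ∫ y in (x t₂)..R, ρp (t₂, y))
            + w t₂ * Real.sqrt (1 + deriv x t₂ ^ 2) := by
  have hL : (0:ℝ) < 2 * R := by linarith
  have part1 : ∀ t ∈ Ioo (0:ℝ) T,
      HasDerivAt (fun s => (∫ y in (-R)..(x s), ρm (s, y)) + ∫ y in (x s)..R, ρp (s, y))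
        (-(deriv x t) * (ρp (t, x t) - ρm (t, x t))
          + (ρp (t, x t) * up (t, x t) - ρm (t, x t) * um (t, x t))) t := by
    intro t ht
    have htI : t ∈ Icc (0:ℝ) T := Ioo_subset_Icc_self ht
    have hxt := abs_lt.1 (hxR t htI)
    -- minus side
    have hd1 := sideDeriv T x hx ρm um hρm hum massm (2 * R) hL t ht
    -- reflected plus side
    have hNmaps : MapsTo (fun q : ℝ × ℝ => ((q.1, -q.2) : ℝ × ℝ))
        {q : ℝ × ℝ | q.1 ∈ Icc 0 T ∧ q.2 ≤ (fun s => -x s) q.1}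
        {q : ℝ × ℝ | q.1 ∈ Icc 0 T ∧ x q.1 ≤ q.2} := by
      intro q hq
      refine ⟨hq.1, ?_⟩
      have h2 : q.2 ≤ -x q.1 := hq.2
      show x q.1 ≤ -q.2
      linarith
    have hN : ContDiff ℝ 1 (fun q : ℝ × ℝ => ((q.1, -q.2) : ℝ × ℝ)) :=
      contDiff_fst.prodMk contDiff_snd.neg
    have hρ2 : ContDiffOn ℝ 1 (fun q : ℝ × ℝ => ρp (q.1, -q.2))
        {q : ℝ × ℝ | q.1 ∈ Icc 0 T ∧ q.2 ≤ (fun s => -x s) q.1} :=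
      hρp.comp hN.contDiffOn hNmaps
    have hu2 : ContDiffOn ℝ 1 (fun q : ℝ × ℝ => -up (q.1, -q.2))
        {q : ℝ × ℝ | q.1 ∈ Icc 0 T ∧ q.2 ≤ (fun s => -x s) q.1} :=
      (hup.comp hN.contDiffOn hNmaps).neg
    have mass2 : ∀ q ∈ {q : ℝ × ℝ | 0 < q.1 ∧ q.1 < T ∧ q.2 < (fun s => -x s) q.1},
        pt (fun q : ℝ × ℝ => ρp (q.1, -q.2)) q
          + px (fun q' : ℝ × ℝ => (fun q : ℝ × ℝ => ρp (q.1, -q.2)) q'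
              * (fun q : ℝ × ℝ => -up (q.1, -q.2)) q') q = 0 := by
      intro q hq
      have hq' : ((q.1, -q.2) : ℝ × ℝ) ∈ {q : ℝ × ℝ | 0 < q.1 ∧ q.1 < T ∧ x q.1 < q.2} := by
        refine ⟨hq.1, hq.2.1, ?_⟩
        have h2 : q.2 < -x q.1 := hq.2.2
        show x q.1 < -q.2
        linarith
      have h := massp _ hq'
      have ept : pt (fun q : ℝ × ℝ => ρp (q.1, -q.2)) q = pt ρp ((q.1, -q.2) : ℝ × ℝ) := rfl
      have epx : px (fun q' : ℝ × ℝ => (fun q : ℝ × ℝ => ρp (q.1, -q.2)) q'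
              * (fun q : ℝ × ℝ => -up (q.1, -q.2)) q') q
          = px (fun q : ℝ × ℝ => ρp q * up q) ((q.1, -q.2) : ℝ × ℝ) := by
        show deriv (fun y => ρp (q.1, -y) * -up (q.1, -y)) q.2
          = deriv (fun y => ρp (q.1, y) * up (q.1, y)) (-q.2)
        have h1 : (fun y => ρp (q.1, -y) * -up (q.1, -y))
            = fun y => -((fun y' => ρp (q.1, y') * up (q.1, y')) (-y)) := by
          funext y; ring
        rw [h1, deriv.fun_neg]
        rw [deriv_comp_neg (fun y' => ρp (q.1, y') * up (q.1, y')) q.2, neg_neg]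
      rw [ept, epx]
      exact h
    have hd2 := sideDeriv T (fun s => -x s) hx.neg (fun q : ℝ × ℝ => ρp (q.1, -q.2))
      (fun q : ℝ × ℝ => -up (q.1, -q.2)) hρ2 hu2 mass2 (2 * R) hL t ht
    -- rewrite integrals for s in Ioo 0 T
    have key_m : ∀ s ∈ Ioo (0:ℝ) T, (∫ z in (-(2*R))..(0:ℝ), ρm (s, z + x s))
        = (∫ y in (-R)..(x s), ρm (s, y)) + ρbar * (R - x s) := by
      intro s hs
      have hsI : s ∈ Icc (0:ℝ) T := Ioo_subset_Icc_self hs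
      have hxs := abs_lt.1 (hxR s hsI)
      have hcm : ContinuousOn (fun y => ρm (s, y)) (Iic (x s)) := by
        apply hρm.continuousOn.comp
        · show ContinuousOn (fun y : ℝ => ((s, y) : ℝ × ℝ)) (Iic (x s))
          exact (continuous_const.prodMk continuous_id).continuousOn
        · exact fun y hy => ⟨hsI, hy⟩
      have h0 : (∫ z in (-(2*R))..(0:ℝ), ρm (s, z + x s))
          = ∫ y in (-(2*R) + x s)..(0 + x s), ρm (s, y) :=
        intervalIntegral.integral_comp_add_right (f := fun y => ρm (s, y)) (x s)
      have hi1 : IntervalIntegrable (fun y => ρm (s, y)) volume (-(2*R) + x s) (-R) := by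
        apply ContinuousOn.intervalIntegrable
        apply hcm.mono
        rw [uIcc_of_le (by linarith)]
        exact fun y hy => le_trans hy.2 (by linarith)
      have hi2 : IntervalIntegrable (fun y => ρm (s, y)) volume (-R) (0 + x s) := by
        apply ContinuousOn.intervalIntegrable
        apply hcm.mono
        rw [uIcc_of_le (by linarith)]
        exact fun y hy => le_trans hy.2 (by linarith)
      have hsplit := intervalIntegral.integral_add_adjacent_intervals hi1 hi2
      have hconst : ∫ y in (-(2*R) + x s)..(-R), ρm (s, y) = ρbar * (R - x s) := by
        rw [intervalIntegral.integral_congr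
          (g := fun _ => ρbar) (fun y hy => ?_), intervalIntegral.integral_const, smul_eq_mul]
        · ring
        · rw [uIcc_of_le (by linarith)] at hy
          exact (hconstm s hsI y hy.2).1
      rw [h0, ← hsplit, hconst]
      simp only [zero_add]
      ring
    have key_p : ∀ s ∈ Ioo (0:ℝ) T, (∫ z in (-(2*R))..(0:ℝ), ρp (s, -(z + -x s)))
        = (∫ y in (x s)..R, ρp (s, y)) + ρbar * (R + x s) := by
      intro s hs
      have hsI : s ∈ Icc (0:ℝ) T := Ioo_subset_Icc_self hs
      have hxs := abs_lt.1 (hxR s hsI)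
      have hcp : ContinuousOn (fun y => ρp (s, y)) (Ici (x s)) := by
        apply hρp.continuousOn.comp
        · show ContinuousOn (fun y : ℝ => ((s, y) : ℝ × ℝ)) (Ici (x s))
          exact (continuous_const.prodMk continuous_id).continuousOn
        · exact fun y hy => ⟨hsI, hy⟩
      have hfun : (fun z : ℝ => ρp (s, -(z + -x s)))
          = fun z : ℝ => (fun w => ρp (s, w + x s)) (-z) := by
        funext z
        have : -(z + -x s) = -z + x s := by ring
        rw [this]
      have h0 : (∫ z in (-(2*R))..(0:ℝ), ρp (s, -(z + -x s)))
          = ∫ z in (-(0:ℝ))..(-(-(2*R))), (fun w => ρp (s, w + x s)) z := by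
        rw [hfun]
        exact intervalIntegral.integral_comp_neg (fun w => ρp (s, w + x s))
      have h1 : (∫ z in (-(0:ℝ))..(-(-(2*R))), (fun w => ρp (s, w + x s)) z)
          = ∫ y in (-(0:ℝ) + x s)..(-(-(2*R)) + x s), ρp (s, y) :=
        intervalIntegral.integral_comp_add_right (f := fun y => ρp (s, y)) (x s)
      have hi1 : IntervalIntegrable (fun y => ρp (s, y)) volume (-(0:ℝ) + x s) R := by
        apply ContinuousOn.intervalIntegrable
        apply hcp.mono
        rw [uIcc_of_le (by linarith)]
        exact fun y hy => le_trans (by linarith : x s ≤ -(0:ℝ) + x s) hy.1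
      have hi2 : IntervalIntegrable (fun y => ρp (s, y)) volume R (-(-(2*R)) + x s) := by
        apply ContinuousOn.intervalIntegrable
        apply hcp.mono
        rw [uIcc_of_le (by linarith)]
        exact fun y hy => le_trans (by linarith) hy.1
      have hsplit := intervalIntegral.integral_add_adjacent_intervals hi1 hi2
      have hconst : ∫ y in R..(-(-(2*R)) + x s), ρp (s, y) = ρbar * (R + x s) := by
        rw [intervalIntegral.integral_congr
          (g := fun _ => ρbar) (fun y hy => ?_), intervalIntegral.integral_const, smul_eq_mul]
        · ring
        · rw [uIcc_of_le (by linarith)] at hy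
          exact (hconstp s hsI y hy.1).1
      rw [h0, h1, ← hsplit, hconst]
      have hz : -(0:ℝ) + x s = x s := by ring
      rw [hz]
    -- assemble
    have hsum := (hd1.fun_add hd2).sub_const (2 * ρbar * R)
    have hval : ((deriv x t * ρm (t, 0 + x t) - ρm (t, 0 + x t) * um (t, 0 + x t))
          - (deriv x t * ρm (t, -(2*R) + x t) - ρm (t, -(2*R) + x t) * um (t, -(2*R) + x t)))
        + ((deriv (fun s => -x s) t * ρp (t, -(0 + -x t))
              - ρp (t, -(0 + -x t)) * -up (t, -(0 + -x t)))
          - (deriv (fun s => -x s) t * ρp (t, -(-(2*R) + -x t))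
              - ρp (t, -(-(2*R) + -x t)) * -up (t, -(-(2*R) + -x t))))
        = -(deriv x t) * (ρp (t, x t) - ρm (t, x t))
          + (ρp (t, x t) * up (t, x t) - ρm (t, x t) * um (t, x t)) := by
      have e1 : (0:ℝ) + x t = x t := by ring
      have e2 : -(0 + -x t) = x t := by ring
      have e3 : -(-(2*R) + -x t) = 2*R + x t := by ring
      have e4 : deriv (fun s => -x s) t = -deriv x t := deriv.fun_neg
      have hcm := hconstm t htI (-(2*R) + x t) (by linarith [hxt.2])
      have hcp := hconstp t htI (2*R + x t) (by linarith [hxt.1])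
      rw [e1, e2, e3, e4, hcm.1, hcm.2, hcp.1, hcp.2]
      ring
    rw [hval] at hsum
    apply hsum.congr_of_eventuallyEq
    apply Filter.eventuallyEq_of_mem (Ioo_mem_nhds ht.1 ht.2)
    intro s hs
    simp only []
    rw [key_m s hs, key_p s hs]
    ring
  refine ⟨part1, ?_⟩
  intro w hw hRH t₁ ht₁ t₂ ht₂
  set G : ℝ → ℝ := fun s => ((∫ y in (-R)..(x s), ρm (s, y)) + ∫ y in (x s)..R, ρp (s, y))
    + w s * Real.sqrt (1 + deriv x s ^ 2) with hGdef
  have hG : ∀ τ ∈ Ioo (0:ℝ) T, HasDerivAt G 0 τ := by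
    intro τ hτ
    have h := (part1 τ hτ).fun_add (hRH τ hτ)
    exact h.congr_deriv (by ring)
  have key : ∀ a b : ℝ, a ∈ Ioo (0:ℝ) T → b ∈ Ioo (0:ℝ) T → a ≤ b → G b = G a := by
    intro a b ha hb hab
    have hsub : Icc a b ⊆ Ioo (0:ℝ) T := fun s hs => ⟨lt_of_lt_of_le ha.1 hs.1,
      lt_of_le_of_lt hs.2 hb.2⟩
    exact constant_of_has_deriv_right_zero
      (fun s hs => ((hG s (hsub hs)).continuousAt).continuousWithinAt)
      (fun s hs => (hG s (hsub ⟨hs.1, le_of_lt hs.2⟩)).hasDerivWithinAt)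
      b (right_mem_Icc.2 hab)
  show G t₁ = G t₂
  rcases le_total t₁ t₂ with h | h
  · exact (key t₁ t₂ ht₁ ht₂ h).symm
  · exact key t₂ t₁ ht₂ ht₁ h
end

section
/- Let p₀, μ > 0, T > 0, let x : [0,T] → ℝ be C¹, and let R > 0 with |x(t)| < R for all t. Let (ρ₋,u₋) be C¹ on {(t,y) ∈ [0,T] × ℝ : y ≤ x(t)} and (ρ₊,u₊) be C¹ on {(t,y) : y ≥ x(t)}, each with positive density and solving the Chaplygin gas system ∂_t ρ + ∂_x(ρu) = 0, ∂_t(ρu) + ∂_x(ρu² + p₀ − μ²/ρ) = 0 in the interior of its region, and suppose there are constants ρ̄ > 0, ū such that (ρ₋,u₋)(t,y) = (ρ̄,ū) for y ≤ −R and (ρ₊,u₊)(t,y) = (ρ̄,ū) for y ≥ R. Define the total momentum S_{ρu}(t) := ∫_{−R}^{x(t)} (ρ₋u₋)(t,y) dy + ∫_{x(t)}^{R} (ρ₊u₊)(t,y) dy and write [h](t) := h₊(t,x(t)) − h₋(t,x(t)). Then for all t ∈ (0,T): dS_{ρu}/dt (t) = −ẋ(t)[ρu](t) + [ρu² + p₀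 − μ²/ρ](t). Consequently, if w : [0,T] → ℝ is C¹ and satisfies the generalized Rankine–Hugoniot condition d/dt ( w(t) ẋ(t) √(1 + ẋ(t)²) ) = ẋ(t)[ρu](t) − [ρu² + p₀ − μ²/ρ](t), then the generalized total momentum S_{ρu}(t) + w(t) ẋ(t) √(1 + ẋ(t)²) is constant in t. -/
open Set

lemma x_lip {T : ℝ} (hT : 0 < T) {x : ℝ → ℝ} (hx : ContDiffOn ℝ 1 x (Icc 0 T)) :
    ∃ L : ℝ, 0 ≤ L ∧ ∀ s ∈ Icc (0:ℝ) T, ∀ t ∈ Icc (0:ℝ) T, |x s - x t| ≤ L * |s - t| := by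
  have hu : UniqueDiffOn ℝ (Icc (0:ℝ) T) := uniqueDiffOn_Icc hT
  have hder : ContinuousOn (derivWithin x (Icc 0 T)) (Icc 0 T) :=
    hx.continuousOn_derivWithin hu le_rfl
  obtain ⟨L, hL⟩ := (isCompact_Icc).exists_bound_of_continuousOn hder
  refine ⟨max L 0, le_max_right _ _, fun s hs t ht => ?_⟩
  have hdiff : DifferentiableOn ℝ x (Icc 0 T) := hx.differentiableOn one_ne_zero
  have h2 := Convex.norm_image_sub_le_of_norm_derivWithin_le hdiff
    (C := max L 0) (fun z hz => le_trans (hL z hz) (le_max_left _ _))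
    (convex_Icc 0 T) ht hs
  simpa [Real.norm_eq_abs] using h2

/-- The minus-side region is uniquely differentiable. -/
lemma region_uniqueDiff {T : ℝ} (hT : 0 < T) {x : ℝ → ℝ}
    (hx : ContDiffOn ℝ 1 x (Icc 0 T)) :
    UniqueDiffOn ℝ {q : ℝ × ℝ | q.1 ∈ Icc 0 T ∧ q.2 ≤ x q.1} := by
  obtain ⟨L, hL0, hL⟩ := x_lip hT hx
  intro q hq
  obtain ⟨hq1, hq2⟩ := hq
  set C : Set (ℝ × ℝ) := {p : ℝ × ℝ | p.1 ∈ Icc 0 T ∧ p.2 + L * |p.1 - q.1| ≤ q.2} with hC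
  have hconv : Convex ℝ C := by
    rintro p ⟨hp1, hp2⟩ r ⟨hr1, hr2⟩ a b ha hb hab
    constructor
    · exact (convex_Icc 0 T) hp1 hr1 ha hb hab
    · have htri : |a * p.1 + b * r.1 - q.1| ≤ a * |p.1 - q.1| + b * |r.1 - q.1| := by
        have heq : a * p.1 + b * r.1 - q.1 = a * (p.1 - q.1) + b * (r.1 - q.1) := by
          linear_combination q.1 * hab
        rw [heq]
        calc |a * (p.1 - q.1) + b * (r.1 - q.1)| ≤ |a * (p.1 - q.1)| + |b * (r.1 - q.1)| :=
              abs_add_le _ _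
        _ = a * |p.1 - q.1| + b * |r.1 - q.1| := by
            rw [abs_mul, abs_mul, abs_of_nonneg ha, abs_of_nonneg hb]
      have h1 : (a • p + b • r).2 + L * |(a • p + b • r).1 - q.1|
          ≤ a * (p.2 + L * |p.1 - q.1|) + b * (r.2 + L * |r.1 - q.1|) := by
        simp only [Prod.smul_fst, Prod.smul_snd, Prod.fst_add, Prod.snd_add, smul_eq_mul]
        nlinarith [mul_le_mul_of_nonneg_left htri hL0]
      refine h1.trans ?_
      have e1 : a * q.2 + b * q.2 = q.2 := by linear_combination q.2 * hab
      linarith [mul_le_mul_of_nonneg_left hp2 ha, mul_le_mul_of_nonneg_left hr2 hb]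
  have hmem : q ∈ C := ⟨hq1, by simpa using hq2⟩
  have hsub : C ⊆ {p : ℝ × ℝ | p.1 ∈ Icc 0 T ∧ p.2 ≤ x p.1} := by
    rintro p ⟨hp1, hp2⟩
    refine ⟨hp1, ?_⟩
    have h3 := abs_le.mp (hL p.1 hp1 q.1 hq1)
    linarith [h3.1, abs_nonneg (p.1 - q.1)]
  have hint : (interior C).Nonempty := by
    have hopen : IsOpen (Ioo (0:ℝ) T ×ˢ Iio (q.2 - L * T - 1)) := (isOpen_Ioo).prod isOpen_Iio
    have hss : Ioo (0:ℝ) T ×ˢ Iio (q.2 - L * T - 1) ⊆ C := by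
      rintro p ⟨hp1, hp2⟩
      simp only [mem_Ioo] at hp1
      simp only [mem_Iio] at hp2
      refine ⟨⟨hp1.1.le, hp1.2.le⟩, ?_⟩
      have habs : |p.1 - q.1| ≤ T := by
        rw [abs_le]; obtain ⟨h01, h02⟩ := hq1; constructor <;> linarith
      nlinarith [mul_le_mul_of_nonneg_left habs hL0]
    exact ⟨(T/2, q.2 - L*T - 2), interior_maximal hss hopen
      ⟨by constructor <;> [linarith; linarith], by simp only [mem_Iio]; linarith⟩⟩
  exact (uniqueDiffWithinAt_convex hconv hint (subset_closure hmem)).mono hsub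

open MeasureTheory intervalIntegral in
lemma side_deriv (T R : ℝ) (hT : 0 < T) (hR : 0 < R)
    (x : ℝ → ℝ) (hx : ContDiffOn ℝ 1 x (Icc 0 T))
    (hxR : ∀ t ∈ Icc (0:ℝ) T, |x t| < R)
    (f P : ℝ × ℝ → ℝ)
    (hf : ContDiffOn ℝ 1 f {q : ℝ × ℝ | q.1 ∈ Icc 0 T ∧ q.2 ≤ x q.1})
    (hP : ContDiffOn ℝ 1 P {q : ℝ × ℝ | q.1 ∈ Icc 0 T ∧ q.2 ≤ x q.1})
    (pde : ∀ q : ℝ × ℝ, 0 < q.1 → q.1 < T → q.2 < x q.1 → pt f q + px P q = 0)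
    (c d : ℝ)
    (hconst : ∀ t ∈ Icc (0:ℝ) T, ∀ y : ℝ, y ≤ -R → f (t, y) = c ∧ P (t, y) = d)
    (t : ℝ) (ht : t ∈ Ioo 0 T) :
    HasDerivAt (fun s => ∫ y in (-R)..(x s), f (s, y))
      (deriv x t * f (t, x t) - P (t, x t) + d) t := by
  set S : Set (ℝ × ℝ) := {q : ℝ × ℝ | q.1 ∈ Icc 0 T ∧ q.2 ≤ x q.1} with hS
  have hxc : ContinuousOn x (Icc 0 T) := hx.continuousOn
  have hfc : ContinuousOn f S := hf.continuousOn
  have hPc : ContinuousOn P S := hP.continuousOn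
  -- the open interior region
  set U : Set (ℝ × ℝ) := {q : ℝ × ℝ | q.1 ∈ Ioo 0 T ∧ q.2 < x q.1} with hU
  have hUopen : IsOpen U := by
    have hcont : ContinuousOn (fun q : ℝ × ℝ => q.2 - x q.1) (Ioo 0 T ×ˢ (univ : Set ℝ)) := by
      refine ContinuousOn.sub (continuous_snd.continuousOn) ?_
      exact (hxc.mono Ioo_subset_Icc_self).comp continuous_fst.continuousOn
        (fun q hq => hq.1)
    have := hcont.isOpen_inter_preimage (isOpen_Ioo.prod isOpen_univ) isOpen_Iio (t := Iio 0)
    convert this using 1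
    ext q
    simp only [hU, mem_setOf_eq, mem_inter_iff, mem_prod, mem_univ, and_true, mem_preimage,
      mem_Iio, sub_neg]
  have hUS : U ⊆ S := fun q hq => ⟨Ioo_subset_Icc_self hq.1, hq.2.le⟩
  have hSnhds : ∀ q ∈ U, S ∈ nhds q := fun q hq =>
    Filter.mem_of_superset (hUopen.mem_nhds hq) hUS
  have hmemS : ∀ s ∈ Icc (0:ℝ) T, ∀ z : ℝ, z ≤ 0 → ((s, x s + z) : ℝ × ℝ) ∈ S := by
    intro s hs z hz
    refine ⟨hs, ?_⟩
    show x s + z ≤ x s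
    linarith
  have hmemU : ∀ s ∈ Ioo (0:ℝ) T, ∀ z : ℝ, z < 0 → ((s, x s + z) : ℝ × ℝ) ∈ U := by
    intro s hs z hz
    refine ⟨hs, ?_⟩
    show x s + z < x s
    linarith
  -- fderiv facts
  set f' : ℝ × ℝ → (ℝ × ℝ) →L[ℝ] ℝ := fderivWithin ℝ f S with hf'
  have hf'c : ContinuousOn f' S := hf.continuousOn_fderivWithin (region_uniqueDiff hT hx) le_rfl
  have hfderiv : ∀ q ∈ U, HasFDerivAt f (f' q) q := by
    intro q hq
    have h1 : HasFDerivAt f (fderiv ℝ f q) q :=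
      ((hf.contDiffAt (hSnhds q hq)).differentiableAt one_ne_zero).hasFDerivAt
    rwa [hf', fderivWithin_of_mem_nhds (hSnhds q hq)]
  have hPderiv : ∀ q ∈ U, HasFDerivAt P (fderiv ℝ P q) q := fun q hq =>
    ((hP.contDiffAt (hSnhds q hq)).differentiableAt one_ne_zero).hasFDerivAt
  -- PDE in fderiv form
  have hpde' : ∀ q ∈ U, fderiv ℝ f q (1, 0) = -(fderiv ℝ P q (0, 1)) := by
    intro q hq
    have hfq : HasFDerivAt f (fderiv ℝ f q) q :=
      ((hf.contDiffAt (hSnhds q hq)).differentiableAt one_ne_zero).hasFDerivAt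
    have h1 : HasDerivAt (fun s => f (s, q.2)) (fderiv ℝ f q (1, 0)) q.1 := by
      have hcurve : HasDerivAt (fun s : ℝ => (s, q.2)) ((1 : ℝ), (0 : ℝ)) q.1 :=
        (hasDerivAt_id q.1).prodMk (hasDerivAt_const q.1 q.2)
      exact HasFDerivAt.comp_hasDerivAt q.1 hfq hcurve
    have h2 : HasDerivAt (fun y => P (q.1, y)) (fderiv ℝ P q (0, 1)) q.2 := by
      have hcurve : HasDerivAt (fun y : ℝ => (q.1, y)) ((0 : ℝ), (1 : ℝ)) q.2 :=
        (hasDerivAt_const q.2 q.1).prodMk (hasDerivAt_id q.2)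
      exact HasFDerivAt.comp_hasDerivAt q.2 (hPderiv q hq) hcurve
    have hp := pde q hq.1.1 hq.1.2 hq.2
    rw [pt, px, h1.deriv, h2.deriv] at hp
    linarith
  -- epsilon neighborhood
  set ε : ℝ := min t (T - t) / 2 with hε
  have hεpos : 0 < ε := by
    have h1 : 0 < min t (T - t) := lt_min ht.1 (by linarith [ht.2])
    positivity
  have hIccIoo : Icc (t - ε) (t + ε) ⊆ Ioo 0 T := by
    intro s hs
    have h1 : ε ≤ t / 2 := by
      have := min_le_left t (T - t); rw [hε]; linarith
    have h2 : ε ≤ (T - t) / 2 := by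
      have := min_le_right t (T - t); rw [hε]; linarith
    constructor
    · have := hs.1; linarith [ht.1]
    · have := hs.2; linarith [ht.2]
  have hballIoo : Metric.ball t ε ⊆ Ioo 0 T := by
    intro s hs
    exact hIccIoo ⟨by have := abs_lt.mp (mem_ball_iff_norm.mp hs); linarith [this.1],
      by have := abs_lt.mp (mem_ball_iff_norm.mp hs); linarith [this.2]⟩
  have hderivx : ∀ s ∈ Ioo (0:ℝ) T, HasDerivAt x (deriv x s) s := by
    intro s hs
    exact ((hx.contDiffAt (Icc_mem_nhds hs.1 hs.2)).differentiableAt one_ne_zero).hasDerivAt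
  -- representation
  have hrep : ∀ s ∈ Icc (0:ℝ) T,
      (∫ y in (-R)..(x s), f (s, y))
        = (∫ z in (-(2*R))..0, f (s, x s + z)) + c * x s - c * R := by
    intro s hs
    have hxs := abs_lt.mp (hxR s hs)
    have h1 : (∫ z in (-(2*R))..0, f (s, x s + z))
        = ∫ y in (x s + -(2*R))..(x s + 0), f (s, y) :=
      integral_comp_add_left (fun y => f (s, y)) (x s)
    have hslice : ContinuousOn (fun y => f (s, y)) (Iic (x s)) := by
      refine hfc.comp ((continuous_const.prodMk continuous_id).continuousOn) ?_
      intro y hy; exact ⟨hs, hy⟩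
    have hi1 : IntervalIntegrable (fun y => f (s, y)) volume (x s + -(2*R)) (-R) := by
      apply ContinuousOn.intervalIntegrable
      apply hslice.mono
      rw [uIcc_of_le (by linarith [hxs.2])]
      intro y hy; exact le_trans hy.2 (by linarith [hxs.1])
    have hi2 : IntervalIntegrable (fun y => f (s, y)) volume (-R) (x s) := by
      apply ContinuousOn.intervalIntegrable
      apply hslice.mono
      rw [uIcc_of_le (by linarith [hxs.1])]
      intro y hy; exact hy.2
    have hsplit := integral_add_adjacent_intervals hi1 hi2
    have hcint : (∫ y in (x s + -(2*R))..(-R), f (s, y)) = c * (R - x s) := by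
      have hcongr : ∀ y ∈ uIcc (x s + -(2*R)) (-R), f (s, y) = c := by
        intro y hy
        rw [uIcc_of_le (by linarith [hxs.2])] at hy
        exact (hconst s hs y hy.2).1
      rw [integral_congr hcongr, intervalIntegral.integral_const]
      simp only [smul_eq_mul]
      ring
    have h0 : x s + 0 = x s := by ring
    rw [h1, h0, ← hsplit, hcint]
    ring
  -- the derivative functions
  set F : ℝ → ℝ → ℝ := fun s z => f (s, x s + z) with hF
  set F' : ℝ → ℝ → ℝ := fun s z => (f' (s, x s + z)) (1, deriv x s) with hF'def
  -- dominated convergence for the parameter derivative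
  have hmain : IntervalIntegrable (F' t) volume (-(2*R)) 0 ∧
      HasDerivAt (fun s => ∫ z in (-(2*R))..0, F s z) (∫ z in (-(2*R))..0, F' t z) t := by
    -- compact bound set
    have hIccsub : Icc (t - ε) (t + ε) ⊆ Icc 0 T :=
      fun s hs => Ioo_subset_Icc_self (hIccIoo hs)
    have hγc : ContinuousOn (fun p : ℝ × ℝ => (p.1, x p.1 + p.2))
        (Icc (t - ε) (t + ε) ×ˢ Icc (-(2*R)) 0) := by
      refine ContinuousOn.prodMk (continuous_fst.continuousOn) ?_
      refine ContinuousOn.add ?_ (continuous_snd.continuousOn)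
      exact hxc.comp (continuous_fst.continuousOn) (fun p hp => hIccsub hp.1)
    have hK : IsCompact ((fun p : ℝ × ℝ => (p.1, x p.1 + p.2)) ''
        (Icc (t - ε) (t + ε) ×ˢ Icc (-(2*R)) 0)) :=
      (isCompact_Icc.prod isCompact_Icc).image_of_continuousOn hγc
    have hKS : (fun p : ℝ × ℝ => (p.1, x p.1 + p.2)) ''
        (Icc (t - ε) (t + ε) ×ˢ Icc (-(2*R)) 0) ⊆ S := by
      rintro q ⟨p, hp, rfl⟩
      exact hmemS p.1 (hIccsub hp.1) p.2 hp.2.2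
    obtain ⟨M, hM⟩ := hK.exists_bound_of_continuousOn (hf'c.mono hKS)
    have hMnn : 0 ≤ M := by
      have hmemK : ((t:ℝ), (0:ℝ)) ∈ Icc (t - ε) (t + ε) ×ˢ Icc (-(2*R)) 0 := by
        simp only [mem_prod, mem_Icc]
        refine ⟨⟨by linarith, by linarith⟩, ⟨by linarith, by linarith⟩⟩
      exact le_trans (norm_nonneg _) (hM _ ⟨(t, 0), hmemK, rfl⟩)
    have hdxc : ContinuousOn (deriv x) (Ioo 0 T) :=
      (hx.mono Ioo_subset_Icc_self).continuousOn_deriv_of_isOpen isOpen_Ioo le_rfl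
    obtain ⟨C1, hC1⟩ := isCompact_Icc.exists_bound_of_continuousOn (hdxc.mono hIccIoo)
    have hC1nn : 0 ≤ C1 := le_trans (norm_nonneg _)
      (hC1 t ⟨by linarith, by linarith⟩)
    -- apply the dominated lemma
    apply intervalIntegral.hasDerivAt_integral_of_dominated_loc_of_deriv_le (Metric.ball_mem_nhds t hεpos)
      (bound := fun _ => M * (1 + C1))
    · -- measurability of F s
      filter_upwards [Ioo_mem_nhds ht.1 ht.2] with s hs
      apply ContinuousOn.aestronglyMeasurable ?_ measurableSet_uIoc
      have : ContinuousOn (fun z => f (s, x s + z)) (Icc (-(2*R)) 0) := by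
        refine hfc.comp ?_ ?_
        · exact (continuous_const.prodMk (continuous_const.add continuous_id)).continuousOn
        · intro z hz; exact hmemS s (Ioo_subset_Icc_self hs) z hz.2
      exact this.mono (by rw [uIoc_of_le (by linarith)]; exact Ioc_subset_Icc_self)
    · -- integrability of F t
      apply ContinuousOn.intervalIntegrable
      have : ContinuousOn (fun z => f (t, x t + z)) (Icc (-(2*R)) 0) := by
        refine hfc.comp ?_ ?_
        · exact (continuous_const.prodMk (continuous_const.add continuous_id)).continuousOn
        · intro z hz; exact hmemS t (Ioo_subset_Icc_self ht) z hz.2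
      exact this.mono (by rw [uIcc_of_le (by linarith)])
    · -- measurability of F' t
      apply ContinuousOn.aestronglyMeasurable ?_ measurableSet_uIoc
      have : ContinuousOn (F' t) (Icc (-(2*R)) 0) := by
        have hcur : ContinuousOn (fun z : ℝ => ((t, x t + z) : ℝ × ℝ)) (Icc (-(2*R)) 0) :=
          (continuous_const.prodMk (continuous_const.add continuous_id)).continuousOn
        have hmaps : ∀ z ∈ Icc (-(2*R)) (0:ℝ), ((t, x t + z) : ℝ × ℝ) ∈ S :=
          fun z hz => hmemS t (Ioo_subset_Icc_self ht) z hz.2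
        exact ContinuousOn.clm_apply (hf'c.comp hcur hmaps) continuousOn_const
      exact this.mono (by rw [uIoc_of_le (by linarith)]; exact Ioc_subset_Icc_self)
    · -- the bound
      apply Filter.Eventually.of_forall
      intro z hzI s hs
      rw [uIoc_of_le (by linarith : -(2*R) ≤ (0:ℝ))] at hzI
      have hsmem : s ∈ Icc (t - ε) (t + ε) := by
        have := abs_lt.mp (mem_ball_iff_norm.mp hs)
        exact ⟨by linarith [this.1], by linarith [this.2]⟩
      have hqK : ((s, x s + z) : ℝ × ℝ) ∈ (fun p : ℝ × ℝ => (p.1, x p.1 + p.2)) ''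
          (Icc (t - ε) (t + ε) ×ˢ Icc (-(2*R)) 0) :=
        ⟨(s, z), ⟨hsmem, ⟨hzI.1.le, hzI.2⟩⟩, rfl⟩
      calc ‖F' s z‖ ≤ ‖f' (s, x s + z)‖ * ‖((1 : ℝ), deriv x s)‖ :=
            ContinuousLinearMap.le_opNorm _ _
      _ ≤ M * (1 + C1) := by
          apply mul_le_mul (hM _ hqK) ?_ (norm_nonneg _) hMnn
          rw [Prod.norm_def]
          apply max_le
          · simp; linarith
          · have := hC1 s hsmem; simp only [Real.norm_eq_abs] at this ⊢; linarith
    · exact intervalIntegrable_const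
    · -- differentiability in s
      have hae : ∀ᵐ z : ℝ, z ≠ 0 := by
        have h0 : volume ({(0:ℝ)} : Set ℝ) = 0 := measure_singleton 0
        filter_upwards [MeasureTheory.measure_eq_zero_iff_ae_notMem.mp h0] with z hz
        simpa using hz
      filter_upwards [hae] with z hz hzI s hs
      rw [uIoc_of_le (by linarith : -(2*R) ≤ (0:ℝ))] at hzI
      have hzneg : z < 0 := lt_of_le_of_ne hzI.2 hz
      have hsIoo : s ∈ Ioo 0 T := hballIoo hs
      have hq : ((s, x s + z) : ℝ × ℝ) ∈ U := hmemU s hsIoo z hzneg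
      have hcurve : HasDerivAt (fun s => ((s, x s + z) : ℝ × ℝ)) ((1 : ℝ), deriv x s) s :=
        (hasDerivAt_id s).prodMk ((hderivx s hsIoo).add_const z)
      exact (hfderiv _ hq).comp_hasDerivAt s hcurve
  obtain ⟨hFint, hAderiv⟩ := hmain
  -- FTC evaluation of the integral of F' t
  set g0 : ℝ → ℝ := fun z => deriv x t * f (t, x t + z) - P (t, x t + z) with hg0
  have hcurmem : ∀ z ∈ Icc (-(2*R)) (0:ℝ), ((t, x t + z) : ℝ × ℝ) ∈ S :=
    fun z hz => hmemS t (Ioo_subset_Icc_self ht) z hz.2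
  have hcurc : ContinuousOn (fun z : ℝ => ((t, x t + z) : ℝ × ℝ)) (Icc (-(2*R)) 0) :=
    (continuous_const.prodMk (continuous_const.add continuous_id)).continuousOn
  have hg0c : ContinuousOn g0 (Icc (-(2*R)) 0) := by
    apply ContinuousOn.sub
    · exact (hfc.comp hcurc hcurmem).const_smul (deriv x t)
    · exact hPc.comp hcurc hcurmem
  have hg0d : ∀ z ∈ Ioo (-(2*R)) (0:ℝ), HasDerivAt g0 (F' t z) z := by
    intro z hz
    have hq : ((t, x t + z) : ℝ × ℝ) ∈ U := hmemU t ht z hz.2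
    have hδ : HasDerivAt (fun z => ((t, x t + z) : ℝ × ℝ)) ((0 : ℝ), (1 : ℝ)) z :=
      (hasDerivAt_const z t).prodMk ((hasDerivAt_id z).const_add (x t))
    have hfd : HasDerivAt (fun z => f (t, x t + z)) (f' (t, x t + z) (0, 1)) z :=
      (hfderiv _ hq).comp_hasDerivAt z hδ
    have hPd : HasDerivAt (fun z => P (t, x t + z)) (fderiv ℝ P (t, x t + z) (0, 1)) z :=
      (hPderiv _ hq).comp_hasDerivAt z hδ
    have htot : HasDerivAt g0
        (deriv x t * (f' (t, x t + z) (0, 1)) - fderiv ℝ P (t, x t + z) (0, 1)) z :=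
      (hfd.const_mul (deriv x t)).sub hPd
    have hfeq : f' (t, x t + z) = fderiv ℝ f (t, x t + z) := by
      rw [hf']; exact fderivWithin_of_mem_nhds (hSnhds _ hq)
    have hval : F' t z
        = deriv x t * (f' (t, x t + z) (0, 1)) - fderiv ℝ P (t, x t + z) (0, 1) := by
      have hsplit : ((1 : ℝ), deriv x t)
          = ((1 : ℝ), (0 : ℝ)) + (deriv x t) • ((0 : ℝ), (1 : ℝ)) := by
        simp [Prod.ext_iff]
      have : F' t z = f' (t, x t + z) (1, 0) + deriv x t * f' (t, x t + z) (0, 1) := by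
        rw [hF'def]
        simp only
        rw [hsplit, map_add]
        simp only [ContinuousLinearMap.map_smul, smul_eq_mul]
      rw [this, hfeq]
      have := hpde' _ hq
      rw [this]
      rw [← hfeq]
      ring
    rw [hval]
    exact htot
  have hIval : (∫ z in (-(2*R))..0, F' t z) = g0 0 - g0 (-(2*R)) :=
    integral_eq_sub_of_hasDeriv_right_of_le (by linarith) hg0c
      (fun z hz => (hg0d z hz).hasDerivWithinAt) hFint
  -- endpoint values
  have hend1 : g0 0 = deriv x t * f (t, x t) - P (t, x t) := by
    rw [hg0]; simp
  have hend2 : g0 (-(2*R)) = deriv x t * c - d := by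
    have hxt := abs_lt.mp (hxR t (Ioo_subset_Icc_self ht))
    have hmem : x t + -(2*R) ≤ -R := by linarith [hxt.2]
    obtain ⟨hc, hd⟩ := hconst t (Ioo_subset_Icc_self ht) (x t + -(2*R)) hmem
    rw [hg0]; simp only; rw [hc, hd]
  -- assemble
  have hxt : HasDerivAt x (deriv x t) t := hderivx t ht
  have hfinal : HasDerivAt (fun s => (∫ z in (-(2*R))..0, f (s, x s + z)) + c * x s - c * R)
      ((∫ z in (-(2*R))..0, F' t z) + c * deriv x t) t :=
    (hAderiv.add (hxt.const_mul c)).sub_const (c * R)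
  have heq : (fun s => ∫ y in (-R)..(x s), f (s, y))
      =ᶠ[nhds t] (fun s => (∫ z in (-(2*R))..0, f (s, x s + z)) + c * x s - c * R) :=
    Filter.eventuallyEq_of_mem (Icc_mem_nhds ht.1 ht.2) hrep
  have := hfinal.congr_of_eventuallyEq heq
  refine this.congr_deriv ?_
  rw [hIval, hend1, hend2]
  ring

open MeasureTheory intervalIntegral in
lemma side_deriv_plus (T R : ℝ) (hT : 0 < T) (hR : 0 < R)
    (x : ℝ → ℝ) (hx : ContDiffOn ℝ 1 x (Icc 0 T))
    (hxR : ∀ t ∈ Icc (0:ℝ) T, |x t| < R)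
    (g P : ℝ × ℝ → ℝ)
    (hg : ContDiffOn ℝ 1 g {q : ℝ × ℝ | q.1 ∈ Icc 0 T ∧ x q.1 ≤ q.2})
    (hP : ContDiffOn ℝ 1 P {q : ℝ × ℝ | q.1 ∈ Icc 0 T ∧ x q.1 ≤ q.2})
    (pde : ∀ q : ℝ × ℝ, 0 < q.1 → q.1 < T → x q.1 < q.2 → pt g q + px P q = 0)
    (c d : ℝ)
    (hconst : ∀ t ∈ Icc (0:ℝ) T, ∀ y : ℝ, R ≤ y → g (t, y) = c ∧ P (t, y) = d)
    (t : ℝ) (ht : t ∈ Ioo 0 T) :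
    HasDerivAt (fun s => ∫ y in (x s)..R, g (s, y))
      (-(deriv x t) * g (t, x t) + P (t, x t) - d) t := by
  have hσ : ContDiff ℝ 1 (fun q : ℝ × ℝ => ((q.1, -q.2) : ℝ × ℝ)) :=
    contDiff_fst.prodMk contDiff_snd.neg
  have hmaps : ∀ q : ℝ × ℝ, q ∈ {q : ℝ × ℝ | q.1 ∈ Icc 0 T ∧ q.2 ≤ (fun s => -x s) q.1} →
      ((q.1, -q.2) : ℝ × ℝ) ∈ {q : ℝ × ℝ | q.1 ∈ Icc 0 T ∧ x q.1 ≤ q.2} := by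
    intro q hq
    have h2 := hq.2
    simp only at h2
    exact ⟨hq.1, by show x q.1 ≤ -q.2; linarith⟩
  have hg' : ContDiffOn ℝ 1 (fun q : ℝ × ℝ => g (q.1, -q.2))
      {q : ℝ × ℝ | q.1 ∈ Icc 0 T ∧ q.2 ≤ (fun s => -x s) q.1} :=
    hg.comp (hσ.contDiffOn) hmaps
  have hP' : ContDiffOn ℝ 1 (fun q : ℝ × ℝ => -P (q.1, -q.2))
      {q : ℝ × ℝ | q.1 ∈ Icc 0 T ∧ q.2 ≤ (fun s => -x s) q.1} :=
    (hP.comp (hσ.contDiffOn) hmaps).neg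
  have hpde' : ∀ q : ℝ × ℝ, 0 < q.1 → q.1 < T → q.2 < (fun s => -x s) q.1 →
      pt (fun q : ℝ × ℝ => g (q.1, -q.2)) q + px (fun q : ℝ × ℝ => -P (q.1, -q.2)) q = 0 := by
    intro q h1 h2 h3
    simp only at h3
    have hpt : pt (fun q : ℝ × ℝ => g (q.1, -q.2)) q = pt g (q.1, -q.2) := rfl
    have hpx : px (fun q : ℝ × ℝ => -P (q.1, -q.2)) q = px P (q.1, -q.2) := by
      show deriv (fun y => -P (q.1, -y)) q.2 = deriv (fun y => P (q.1, y)) (-q.2)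
      rw [deriv.fun_neg, deriv_comp_neg (f := fun y => P (q.1, y))]
      ring
    rw [hpt, hpx]
    exact pde (q.1, -q.2) h1 h2 (by show x q.1 < -q.2; linarith)
  have hconst' : ∀ s ∈ Icc (0:ℝ) T, ∀ y : ℝ, y ≤ -R →
      (fun q : ℝ × ℝ => g (q.1, -q.2)) (s, y) = c ∧
      (fun q : ℝ × ℝ => -P (q.1, -q.2)) (s, y) = -d := by
    intro s hs y hy
    obtain ⟨h1, h2⟩ := hconst s hs (-y) (by linarith)
    exact ⟨h1, by simp [h2]⟩
  have h := side_deriv T R hT hR (fun s => -x s) hx.neg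
    (fun s hs => by simpa using hxR s hs)
    (fun q : ℝ × ℝ => g (q.1, -q.2)) (fun q : ℝ × ℝ => -P (q.1, -q.2))
    hg' hP' hpde' c (-d) hconst' t ht
  have hfun : (fun s => ∫ y in (-R)..((fun s => -x s) s),
      (fun q : ℝ × ℝ => g (q.1, -q.2)) (s, y)) = fun s => ∫ y in (x s)..R, g (s, y) := by
    funext s
    show (∫ y in (-R)..(-x s), g (s, -y)) = _
    rw [intervalIntegral.integral_comp_neg (fun y => g (s, y))]
    norm_num
  rw [hfun] at h
  have hd : deriv (fun s => -x s) t = -deriv x t := deriv.fun_neg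
  rw [hd] at h
  simp only [neg_neg] at h
  convert h using 1
  ring

/-- Theorem 4.1 (momentum part): the balance law `Ṡ_{ρu} = −ẋ[ρu] + [ρu² + p(ρ)]` holds,
and with the second generalized Rankine–Hugoniot condition the generalized total momentum
`S_{ρu}(t) + w(t)ẋ(t)√(1+ẋ(t)²)` is conserved. -/
theorem generalized_momentum_conservation
    (p₀ μ T : ℝ) (hp₀ : 0 < p₀) (hμ : 0 < μ) (hT : 0 < T)
    (x : ℝ → ℝ) (hx : ContDiffOn ℝ 1 x (Icc 0 T))
    (R : ℝ) (hR : 0 < R) (hxR : ∀ t ∈ Icc (0:ℝ) T, |x t| < R)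
    (ρm um ρp up : ℝ × ℝ → ℝ)
    (hρm : ContDiffOn ℝ 1 ρm {q : ℝ × ℝ | q.1 ∈ Icc 0 T ∧ q.2 ≤ x q.1})
    (hum : ContDiffOn ℝ 1 um {q : ℝ × ℝ | q.1 ∈ Icc 0 T ∧ q.2 ≤ x q.1})
    (hρp : ContDiffOn ℝ 1 ρp {q : ℝ × ℝ | q.1 ∈ Icc 0 T ∧ x q.1 ≤ q.2})
    (hup : ContDiffOn ℝ 1 up {q : ℝ × ℝ | q.1 ∈ Icc 0 T ∧ x q.1 ≤ q.2})
    (hρmpos : ∀ q ∈ {q : ℝ × ℝ | q.1 ∈ Icc 0 T ∧ q.2 ≤ x q.1}, 0 < ρm q)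
    (hρppos : ∀ q ∈ {q : ℝ × ℝ | q.1 ∈ Icc 0 T ∧ x q.1 ≤ q.2}, 0 < ρp q)
    (massm : ∀ q ∈ {q : ℝ × ℝ | 0 < q.1 ∧ q.1 < T ∧ q.2 < x q.1},
      pt ρm q + px (fun q => ρm q * um q) q = 0)
    (momentumm : ∀ q ∈ {q : ℝ × ℝ | 0 < q.1 ∧ q.1 < T ∧ q.2 < x q.1},
      pt (fun q => ρm q * um q) q
        + px (fun q => ρm q * um q ^ 2 + p₀ - μ ^ 2 / ρm q) q = 0)
    (massp : ∀ q ∈ {q : ℝ × ℝ | 0 < q.1 ∧ q.1 < T ∧ x q.1 < q.2},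
      pt ρp q + px (fun q => ρp q * up q) q = 0)
    (momentump : ∀ q ∈ {q : ℝ × ℝ | 0 < q.1 ∧ q.1 < T ∧ x q.1 < q.2},
      pt (fun q => ρp q * up q) q
        + px (fun q => ρp q * up q ^ 2 + p₀ - μ ^ 2 / ρp q) q = 0)
    (ρbar ubar : ℝ) (hρbar : 0 < ρbar)
    (hconstm : ∀ t ∈ Icc (0:ℝ) T, ∀ y : ℝ, y ≤ -R → ρm (t, y) = ρbar ∧ um (t, y) = ubar)
    (hconstp : ∀ t ∈ Icc (0:ℝ) T, ∀ y : ℝ, R ≤ y → ρp (t, y) = ρbar ∧ up (t, y) = ubar) :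
    (∀ t ∈ Ioo (0:ℝ) T,
      HasDerivAt (fun s => (∫ y in (-R)..(x s), ρm (s, y) * um (s, y))
          + ∫ y in (x s)..R, ρp (s, y) * up (s, y))
        (-(deriv x t) * (ρp (t, x t) * up (t, x t) - ρm (t, x t) * um (t, x t))
          + ((ρp (t, x t) * up (t, x t) ^ 2 + p₀ - μ ^ 2 / ρp (t, x t))
            - (ρm (t, x t) * um (t, x t) ^ 2 + p₀ - μ ^ 2 / ρm (t, x t)))) t) ∧
    ∀ w : ℝ → ℝ, ContDiffOn ℝ 1 w (Icc 0 T) →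
      (∀ t ∈ Ioo (0:ℝ) T,
        HasDerivAt (fun s => w s * deriv x s * Real.sqrt (1 + deriv x s ^ 2))
          (deriv x t * (ρp (t, x t) * up (t, x t) - ρm (t, x t) * um (t, x t))
            - ((ρp (t, x t) * up (t, x t) ^ 2 + p₀ - μ ^ 2 / ρp (t, x t))
              - (ρm (t, x t) * um (t, x t) ^ 2 + p₀ - μ ^ 2 / ρm (t, x t)))) t) →
      ∀ t₁ ∈ Ioo (0:ℝ) T, ∀ t₂ ∈ Ioo (0:ℝ) T,
        ((∫ y in (-R)..(x t₁), ρm (t₁, y) * um (t₁, y))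
            + ∫ y in (x t₁)..R, ρp (t₁, y) * up (t₁, y))
            + w t₁ * deriv x t₁ * Real.sqrt (1 + deriv x t₁ ^ 2)
          = ((∫ y in (-R)..(x t₂), ρm (t₂, y) * um (t₂, y))
            + ∫ y in (x t₂)..R, ρp (t₂, y) * up (t₂, y))
            + w t₂ * deriv x t₂ * Real.sqrt (1 + deriv x t₂ ^ 2) := by
  have hd : ρbar ≠ 0 := ne_of_gt hρbar
  -- the flux functions
  have hfm : ContDiffOn ℝ 1 (fun q => ρm q * um q)
      {q : ℝ × ℝ | q.1 ∈ Icc 0 T ∧ q.2 ≤ x q.1} := hρm.mul hum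
  have hPm : ContDiffOn ℝ 1 (fun q => ρm q * um q ^ 2 + p₀ - μ ^ 2 / ρm q)
      {q : ℝ × ℝ | q.1 ∈ Icc 0 T ∧ q.2 ≤ x q.1} :=
    ((hρm.mul (hum.pow 2)).add contDiffOn_const).sub
      (contDiffOn_const.div hρm (fun q hq => ne_of_gt (hρmpos q hq)))
  have hfp : ContDiffOn ℝ 1 (fun q => ρp q * up q)
      {q : ℝ × ℝ | q.1 ∈ Icc 0 T ∧ x q.1 ≤ q.2} := hρp.mul hup
  have hPp : ContDiffOn ℝ 1 (fun q => ρp q * up q ^ 2 + p₀ - μ ^ 2 / ρp q)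
      {q : ℝ × ℝ | q.1 ∈ Icc 0 T ∧ x q.1 ≤ q.2} :=
    ((hρp.mul (hup.pow 2)).add contDiffOn_const).sub
      (contDiffOn_const.div hρp (fun q hq => ne_of_gt (hρppos q hq)))
  have hconstm' : ∀ t ∈ Icc (0:ℝ) T, ∀ y : ℝ, y ≤ -R →
      (fun q : ℝ × ℝ => ρm q * um q) (t, y) = ρbar * ubar ∧
      (fun q : ℝ × ℝ => ρm q * um q ^ 2 + p₀ - μ ^ 2 / ρm q) (t, y)
        = ρbar * ubar ^ 2 + p₀ - μ ^ 2 / ρbar := by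
    intro s hs y hy
    obtain ⟨h1, h2⟩ := hconstm s hs y hy
    simp only [h1, h2]
    exact ⟨trivial, trivial⟩
  have hconstp' : ∀ t ∈ Icc (0:ℝ) T, ∀ y : ℝ, R ≤ y →
      (fun q : ℝ × ℝ => ρp q * up q) (t, y) = ρbar * ubar ∧
      (fun q : ℝ × ℝ => ρp q * up q ^ 2 + p₀ - μ ^ 2 / ρp q) (t, y)
        = ρbar * ubar ^ 2 + p₀ - μ ^ 2 / ρbar := by
    intro s hs y hy
    obtain ⟨h1, h2⟩ := hconstp s hs y hy
    simp only [h1, h2]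
    exact ⟨trivial, trivial⟩
  have hfirst : ∀ t ∈ Ioo (0:ℝ) T,
      HasDerivAt (fun s => (∫ y in (-R)..(x s), ρm (s, y) * um (s, y))
          + ∫ y in (x s)..R, ρp (s, y) * up (s, y))
        (-(deriv x t) * (ρp (t, x t) * up (t, x t) - ρm (t, x t) * um (t, x t))
          + ((ρp (t, x t) * up (t, x t) ^ 2 + p₀ - μ ^ 2 / ρp (t, x t))
            - (ρm (t, x t) * um (t, x t) ^ 2 + p₀ - μ ^ 2 / ρm (t, x t)))) t := by
    intro t ht
    have h1 := side_deriv T R hT hR x hx hxR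
      (fun q => ρm q * um q) (fun q => ρm q * um q ^ 2 + p₀ - μ ^ 2 / ρm q)
      hfm hPm (fun q hq1 hq2 hq3 => momentumm q ⟨hq1, hq2, hq3⟩)
      (ρbar * ubar) (ρbar * ubar ^ 2 + p₀ - μ ^ 2 / ρbar) hconstm' t ht
    have h2 := side_deriv_plus T R hT hR x hx hxR
      (fun q => ρp q * up q) (fun q => ρp q * up q ^ 2 + p₀ - μ ^ 2 / ρp q)
      hfp hPp (fun q hq1 hq2 hq3 => momentump q ⟨hq1, hq2, hq3⟩)
      (ρbar * ubar) (ρbar * ubar ^ 2 + p₀ - μ ^ 2 / ρbar) hconstp' t ht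
    have h3 := h1.fun_add h2
    refine h3.congr_deriv ?_
    ring
  refine ⟨hfirst, ?_⟩
  intro w hw hw2 t₁ ht₁ t₂ ht₂
  set Φ : ℝ → ℝ := fun s => ((∫ y in (-R)..(x s), ρm (s, y) * um (s, y))
      + ∫ y in (x s)..R, ρp (s, y) * up (s, y))
      + w s * deriv x s * Real.sqrt (1 + deriv x s ^ 2) with hΦdef
  have hΦ : ∀ s ∈ Ioo (0:ℝ) T, HasDerivAt Φ 0 s := by
    intro s hs
    have h := (hfirst s hs).fun_add (hw2 s hs)
    refine h.congr_deriv ?_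
    ring
  have key : ∀ a ∈ Ioo (0:ℝ) T, ∀ b ∈ Ioo (0:ℝ) T, a ≤ b → Φ b = Φ a := by
    intro a ha b hb hab
    have hsub : Icc a b ⊆ Ioo 0 T :=
      fun s hs => ⟨lt_of_lt_of_le ha.1 hs.1, lt_of_le_of_lt hs.2 hb.2⟩
    have hcont : ContinuousOn Φ (Icc a b) :=
      fun s hs => (hΦ s (hsub hs)).continuousAt.continuousWithinAt
    have hderiv : ∀ s ∈ Ico a b, HasDerivWithinAt Φ 0 (Ici s) s :=
      fun s hs => (hΦ s (hsub (Ico_subset_Icc_self hs))).hasDerivWithinAt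
    exact constant_of_has_deriv_right_zero hcont hderiv b ⟨hab, le_refl b⟩
  rcases le_total t₁ t₂ with h | h
  · exact (key t₁ ht₁ t₂ ht₂ h).symm
  · exact key t₂ ht₂ t₁ ht₁ h
end
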